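/- arXiv:1802.02291 — 14 statements merged into one kernel-verified Lean document; each statement's English description precedes it below -/
import Mathlib

section
/- A neighborhood frame F = (S, N) validates the formula Δp ↔ Δ¬p under the new neighborhood semantics (where M,s ⊨ Δφ iff the truth set of φ is in N(s)) if and only if F has property (c): for all s ∈ S and X ⊆ S, X ∈ N(s) implies S \ X ∈ N(s). -/
inductive CForm : Type where
  | atom : ℕ → CForm
  | neg : CForm → CForm
  | conj : CForm → CForm → CForm
  | delta : CForm → CForm

/-- p → q abbreviates ¬(p ∧ ¬q) -/
def CForm.impl (φ ψ : CForm) : CForm := .neg (.conj φ (.neg ψ))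
/-- p ∨ q abbreviates ¬(¬p ∧ ¬q) -/
def CForm.disj (φ ψ : CForm) : CForm := .neg (.conj (.neg φ) (.neg ψ))

structure NbhModel (S : Type) where
  N : S → Set (Set S)
  V : ℕ → Set S

/-- new neighborhood semantics -/
def newSat {S : Type} (M : NbhModel S) : S → CForm → Prop
  | s, .atom p => s ∈ M.V p
  | s, .neg φ => ¬ newSat M s φ
  | s, .conj φ ψ => newSat M s φ ∧ newSat M s ψ
  | s, .delta φ => {t | newSat M t φ} ∈ M.N s

/-- old neighborhood semantics -/
def oldSat {S : Type} (M : NbhModel S) : S → CForm → Prop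
  | s, .atom p => s ∈ M.V p
  | s, .neg φ => ¬ oldSat M s φ
  | s, .conj φ ψ => oldSat M s φ ∧ oldSat M s ψ
  | s, .delta φ => {t | oldSat M t φ} ∈ M.N s ∨ {t | oldSat M t φ}ᶜ ∈ M.N s

/-- property (c): closure under complements -/
def HasC {S : Type} (N : S → Set (Set S)) : Prop :=
  ∀ s X, X ∈ N s → Xᶜ ∈ N s

/-- a c-model -/
def IsCModel {S : Type} (M : NbhModel S) : Prop := HasC M.N

/-- the c-variation of a neighborhood model -/
def cVar {S : Type} (M : NbhModel S) : NbhModel S :=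
  ⟨fun s => {X | X ∈ M.N s ∨ Xᶜ ∈ M.N s}, M.V⟩

structure KModel (S : Type) where
  R : S → S → Prop
  V : ℕ → Set S

/-- Kripke semantics for contingency logic -/
def kSat {S : Type} (M : KModel S) : S → CForm → Prop
  | s, .atom p => s ∈ M.V p
  | s, .neg φ => ¬ kSat M s φ
  | s, .conj φ ψ => kSat M s φ ∧ kSat M s ψ
  | s, .delta φ => ∀ t u, M.R s t → M.R s u → (kSat M t φ ↔ kSat M u φ)

/-- the qf-variation of a Kripke model -/
def qfVar {S : Type} (M : KModel S) : NbhModel S :=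
  ⟨fun s => {X | {t | M.R s t} ⊆ X ∨ {t | M.R s t} ⊆ Xᶜ}, M.V⟩

/-- (U,U') is Z-coherent -/
def ZCoherent {S S' : Type} (Z : S → S' → Prop) (U : Set S) (U' : Set S') : Prop :=
  ∀ x y, Z x y → (x ∈ U ↔ y ∈ U')

/-- a c-bisimulation (also: qf-bisimulation, monotonic c-bisimulation): atoms agree
and Z-coherent pairs are matched in neighborhoods -/
def IsCBisim {S S' : Type} (M : NbhModel S) (M' : NbhModel S') (Z : S → S' → Prop) : Prop :=
  ∀ s s', Z s s' →
    ((∀ p, s ∈ M.V p ↔ s' ∈ M'.V p) ∧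
     ∀ U U', ZCoherent Z U U' → (U ∈ M.N s ↔ U' ∈ M'.N s'))

/-- an nbh-Δ-bisimulation -/
def IsNbhDeltaBisim {S S' : Type} (M : NbhModel S) (M' : NbhModel S') (Z : S → S' → Prop) : Prop :=
  ∀ s s', Z s s' →
    ((∀ p, s ∈ M.V p ↔ s' ∈ M'.V p) ∧
     ∀ U U', ZCoherent Z U U' →
       ((U ∈ M.N s ∨ Uᶜ ∈ M.N s) ↔ (U' ∈ M'.N s' ∨ U'ᶜ ∈ M'.N s')))

/-- property (s): closure under supersets (monotonicity) -/
def HasMono {S : Type} (N : S → Set (Set S)) : Prop :=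
  ∀ s X Y, X ∈ N s → X ⊆ Y → Y ∈ N s

/-- a c-monotonic bisimulation -/
def IsCMonBisim {S S' : Type} (M : NbhModel S) (M' : NbhModel S') (Z : S → S' → Prop) : Prop :=
  ∀ s s', Z s s' →
    ((∀ p, s ∈ M.V p ↔ s' ∈ M'.V p) ∧
     (∀ X, X ∈ M.N s → ∃ X' ∈ M'.N s', ∀ x' ∈ X', ∃ x ∈ X, Z x x') ∧
     (∀ X', X' ∈ M'.N s' → ∃ X ∈ M.N s, ∀ x ∈ X, ∃ x' ∈ X', Z x x'))

/-- quasi-filter: (n), (i), (c), (ws) -/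
def IsQuasiFilter {S : Type} (N : S → Set (Set S)) : Prop :=
  ∀ s, (Set.univ ∈ N s) ∧
    (∀ X Y, X ∈ N s → Y ∈ N s → X ∩ Y ∈ N s) ∧
    (∀ X, X ∈ N s → Xᶜ ∈ N s) ∧
    (∀ X, X ∈ N s → ∀ Y Z : Set S, X ∪ Y ∈ N s ∨ Xᶜ ∪ Z ∈ N s)

/-- a rel-Δ-bisimulation between Kripke models -/
def IsRelDeltaBisim {S S' : Type} (M : KModel S) (M' : KModel S') (Z : S → S' → Prop) : Prop :=
  ∀ s s', Z s s' →
    ((∀ p, s ∈ M.V p ↔ s' ∈ M'.V p) ∧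
     ∀ U U', ZCoherent Z U U' →
       (({t | M.R s t} ⊆ U ∨ {t | M.R s t} ⊆ Uᶜ) ↔
        ({t | M'.R s' t} ⊆ U' ∨ {t | M'.R s' t} ⊆ U'ᶜ)))

/-- a frame validates Δp ↔ Δ¬p under the new semantics iff it has property (c). -/
theorem stmt0 {S : Type} [Nonempty S] (N : S → Set (Set S)) :
    (∀ (V : ℕ → Set S) (s : S),
      newSat ⟨N, V⟩ s (.delta (.atom 0)) ↔ newSat ⟨N, V⟩ s (.delta (.neg (.atom 0)))) ↔
    HasC N := by
  constructor
  · intro h s X hX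
    have := (h (fun _ => X) s).mp
    simp only [newSat] at this
    have hx : {t | t ∈ X} = X := rfl
    have := this (by simpa [hx] using hX)
    simpa [Set.compl_def] using this
  · intro hc V s
    simp only [newSat]
    constructor
    · intro h; exact hc s _ h
    · intro h
      have := hc s _ h
      simpa [Set.compl_setOf, compl_compl] using this
end

section
/- Let M = (S, N, V) be a c-model (i.e., for all s, X ∈ N(s) implies S\X ∈ N(s)). Then for every formula φ of the contingency language and every s ∈ S, M,s satisfies φ under the new semantics (Δφ true iff φ^M ∈ N(s)) if and only if M,s satisfies φ under the old semantics (Δφ true iff φ^M ∈ N(s) or (¬φ)^M ∈ N(s)). -/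
/-- on c-models the new and old semantics coincide. -/
theorem stmt1 {S : Type} (M : NbhModel S) (hc : IsCModel M) :
    ∀ (φ : CForm) (s : S), newSat M s φ ↔ oldSat M s φ := by
  intro φ
  induction φ with
  | atom p => intro s; rfl
  | neg φ ih => intro s; simp [newSat, oldSat, ih s]
  | conj φ ψ ih1 ih2 => intro s; simp [newSat, oldSat, ih1 s, ih2 s]
  | delta φ ih =>
    intro s
    have hset : {t | newSat M t φ} = {t | oldSat M t φ} := Set.ext fun t => ih t
    simp only [newSat, oldSat, hset]
    constructor
    · exact Or.inl
    · rintro (h | h)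
      · exact h
      · have := hc s _ h
        rwa [compl_compl] at this
end

section
/- For any neighborhood model M = (S, N, V), define its c-variation c(M) = (S, cN, V) where cN(s) = {X ⊆ S : X ∈ N(s) or S\X ∈ N(s)}. Then c(M) is a c-model, and for every contingency formula φ and state s, M,s satisfies φ under the old semantics if and only if c(M),s satisfies φ under the new semantics. -/
/-- the c-variation is a c-model and is pointwise equivalent
(old semantics on M vs new semantics on c(M)). -/
theorem stmt2 {S : Type} (M : NbhModel S) :
    IsCModel (cVar M) ∧
    ∀ (φ : CForm) (s : S), oldSat M s φ ↔ newSat (cVar M) s φ := by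
  constructor
  · intro s X hX
    simp only [cVar, Set.mem_setOf_eq, compl_compl] at *
    tauto
  · intro φ
    induction φ with
    | atom p => intro s; rfl
    | neg φ ih => intro s; simp [oldSat, newSat, ih]
    | conj φ ψ ih1 ih2 => intro s; simp [oldSat, newSat, ih1, ih2]
    | delta φ ih =>
      intro s
      have h : {t | oldSat M t φ} = {t | newSat (cVar M) t φ} := Set.ext fun t => ih t
      simp [oldSat, newSat, cVar, h]
end

section
/- A set of contingency formulas Γ entails φ over the class of all c-models under the new neighborhood semantics if and only if Γ entails φ over the class of all neighborhood models under the old semantics. -/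
lemma new_eq_old_of_c {S : Type} (M : NbhModel S) (h : IsCModel M) :
    ∀ ψ s, newSat M s ψ ↔ oldSat M s ψ := by
  intro ψ
  induction ψ with
  | atom p => intro s; rfl
  | neg ψ ih => intro s; simp [newSat, oldSat, ih s]
  | conj ψ χ ih1 ih2 => intro s; simp [newSat, oldSat, ih1 s, ih2 s]
  | delta ψ ih =>
    intro s
    have : {t | newSat M t ψ} = {t | oldSat M t ψ} := Set.ext fun t => ih t
    simp only [newSat, oldSat, this]
    constructor
    · exact Or.inl
    · rintro (h1 | h1)
      · exact h1
      · have := h s _ h1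
        simpa using this

lemma cVar_new_eq_old {S : Type} (M : NbhModel S) :
    ∀ ψ s, newSat (cVar M) s ψ ↔ oldSat M s ψ := by
  intro ψ
  induction ψ with
  | atom p => intro s; rfl
  | neg ψ ih => intro s; simp [newSat, oldSat, ih s]
  | conj ψ χ ih1 ih2 => intro s; simp [newSat, oldSat, ih1 s, ih2 s]
  | delta ψ ih =>
    intro s
    have : {t | newSat (cVar M) t ψ} = {t | oldSat M t ψ} := Set.ext fun t => ih t
    simp only [newSat, oldSat, cVar, Set.mem_setOf_eq]
    simp only [cVar] at this
    rw [this]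

lemma cVar_isCModel {S : Type} (M : NbhModel S) : IsCModel (cVar M) := by
  intro s X hX
  rcases hX with h | h
  · exact Or.inr (by simpa using h)
  · exact Or.inl h

/-- entailment over c-models under the new semantics coincides with
entailment over all neighborhood models under the old semantics. -/
theorem stmt4 (Γ : Set CForm) (φ : CForm) :
    (∀ (S : Type) (M : NbhModel S) (s : S), IsCModel M →
      (∀ ψ ∈ Γ, newSat M s ψ) → newSat M s φ) ↔
    (∀ (S : Type) (M : NbhModel S) (s : S),
      (∀ ψ ∈ Γ, oldSat M s ψ) → oldSat M s φ) := by
  constructor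
  · intro h S M s hprem
    have := h S (cVar M) s (cVar_isCModel M)
      (fun ψ hψ => (cVar_new_eq_old M ψ s).2 (hprem ψ hψ))
    exact (cVar_new_eq_old M φ s).1 this
  · intro h S M s hc hprem
    have := h S M s (fun ψ hψ => (new_eq_old_of_c M hc ψ s).1 (hprem ψ hψ))
    exact (new_eq_old_of_c M hc φ s).2 this
end

section
/- Contingency formulas are invariant under c-bisimilarity: if M and M' are c-models and Z is a c-bisimulation between them with (s,s') ∈ Z, then for all contingency formulas φ, M,s ⊨ φ iff M',s' ⊨ φ (under the new semantics). -/
/-- invariance of contingency formulas under c-bisimilarity. -/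
theorem stmt5 {S S' : Type} (M : NbhModel S) (M' : NbhModel S')
    (hM : IsCModel M) (hM' : IsCModel M')
    (Z : S → S' → Prop) (hZ : IsCBisim M M' Z) (s : S) (s' : S') (hss' : Z s s') :
    ∀ φ : CForm, newSat M s φ ↔ newSat M' s' φ := by
  intro φ
  induction φ generalizing s s' with
  | atom p => exact (hZ s s' hss').1 p
  | neg φ ih => exact not_congr (ih s s' hss')
  | conj φ ψ ih1 ih2 => exact and_congr (ih1 s s' hss') (ih2 s s' hss')
  | delta φ ih =>
    exact (hZ s s' hss').2 _ _ (fun x y hxy => ih x y hxy)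
end

section
/- If M and M' are c-models and Z is a c-bisimulation between them, then Z is an nbh-Δ-bisimulation between M and M'. Consequently, between c-models, Z is a c-bisimulation if and only if it is an nbh-Δ-bisimulation. -/
/-- between c-models, every c-bisimulation is an nbh-Δ-bisimulation;
consequently the two notions coincide. -/
theorem stmt7 {S S' : Type} (M : NbhModel S) (M' : NbhModel S')
    (hM : IsCModel M) (hM' : IsCModel M') (Z : S → S' → Prop)
    (hne : ∃ s s', Z s s') :
    (IsCBisim M M' Z → IsNbhDeltaBisim M M' Z) ∧
    (IsCBisim M M' Z ↔ IsNbhDeltaBisim M M' Z) := by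
  have fwd : IsCBisim M M' Z → IsNbhDeltaBisim M M' Z := by
    intro h s s' hz
    obtain ⟨hv, hn⟩ := h s s' hz
    refine ⟨hv, fun U U' hc => ?_⟩
    have hcc : ZCoherent Z Uᶜ U'ᶜ := fun x y hxy => not_iff_not.mpr (hc x y hxy)
    rw [hn U U' hc, hn Uᶜ U'ᶜ hcc]
  have bwd : IsNbhDeltaBisim M M' Z → IsCBisim M M' Z := by
    intro h s s' hz
    obtain ⟨hv, hn⟩ := h s s' hz
    refine ⟨hv, fun U U' hc => ?_⟩
    constructor
    · intro hU
      rcases (hn U U' hc).mp (Or.inl hU) with h' | h'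
      · exact h'
      · simpa using hM' s' _ h'
    · intro hU
      rcases (hn U U' hc).mpr (Or.inl hU) with h' | h'
      · exact h'
      · simpa using hM s _ h'
  exact ⟨fwd, ⟨fwd, bwd⟩⟩
end

section
/- Between monotonic c-models, every c-monotonic bisimulation is a monotonic c-bisimulation. -/
/-- between monotonic c-models, every c-monotonic bisimulation is a
monotonic c-bisimulation. -/
theorem stmt8 {S S' : Type} (M : NbhModel S) (M' : NbhModel S')
    (hMs : HasMono M.N) (hMc : HasC M.N) (hM's : HasMono M'.N) (hM'c : HasC M'.N)
    (Z : S → S' → Prop) (hne : ∃ s s', Z s s')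
    (hZ : IsCMonBisim M M' Z) :
    IsCBisim M M' Z := by
  intro s s' hss'
  obtain ⟨hatoms, hzig, hzag⟩ := hZ s s' hss'
  refine ⟨hatoms, fun U U' hcoh => ⟨fun hU => ?_, fun hU' => ?_⟩⟩
  · obtain ⟨X', hX', hmatch⟩ := hzig U hU
    exact hM's s' X' U' hX' fun x' hx' => by
      obtain ⟨x, hx, hxZ⟩ := hmatch x' hx'
      exact (hcoh x x' hxZ).mp hx
  · obtain ⟨X, hX, hmatch⟩ := hzag U' hU'
    exact hMs s X U hX fun x hx => by
      obtain ⟨x', hx', hxZ⟩ := hmatch x hx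
      exact (hcoh x x' hxZ).mpr hx'
end

section
/- For every Kripke model M and its qf-variation qf(M), and for every contingency formula φ and state s: M,s ⊨ φ under Kripke semantics iff qf(M),s ⊨ φ under the new neighborhood semantics. Hence every Kripke model has a pointwise equivalent quasi-filter model. -/
/-- Kripke semantics on M coincides pointwise with the new
neighborhood semantics on qf(M); hence every Kripke model has a pointwise
equivalent quasi-filter model. -/
theorem stmt11 {S : Type} (M : KModel S) :
    (∀ (φ : CForm) (s : S), kSat M s φ ↔ newSat (qfVar M) s φ) ∧
    IsQuasiFilter (qfVar M).N := by
  constructor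
  · intro φ
    induction φ with
    | atom p => intro s; rfl
    | neg φ ih => intro s; simp only [kSat, newSat, ih]
    | conj φ ψ ih1 ih2 => intro s; simp only [kSat, newSat, ih1, ih2]
    | delta φ ih =>
      intro s
      simp only [kSat, newSat, qfVar, Set.mem_setOf_eq, ih]
      constructor
      · intro h
        by_cases hx : ∃ t, M.R s t ∧ newSat (qfVar M) t φ
        · obtain ⟨t, ht, htφ⟩ := hx
          left; intro u hu
          exact ((h t u ht hu).mp htφ)
        · right; intro u hu hφ
          exact hx ⟨u, hu, hφ⟩
      · rintro (h | h) t u ht hu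
        · exact iff_of_true (h ht) (h hu)
        · exact iff_of_false (h ht) (h hu)
  · intro s
    refine ⟨Or.inl (fun _ _ => trivial), ?_, ?_, ?_⟩
    · rintro X Y (hX | hX) (hY | hY)
      · exact Or.inl (fun t ht => ⟨hX ht, hY ht⟩)
      · exact Or.inr (fun t ht h => hY ht h.2)
      · exact Or.inr (fun t ht h => hX ht h.1)
      · exact Or.inr (fun t ht h => hX ht h.1)
    · rintro X (hX | hX)
      · exact Or.inr (fun t ht => by simpa using hX ht)
      · exact Or.inl hX
    · rintro X (hX | hX) Y Z
      · exact Or.inl (Or.inl (fun t ht => Or.inl (hX ht)))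
      · exact Or.inr (Or.inl (fun t ht => Or.inl (hX ht)))
end

section
/- Every finite quasi-filter model M = (S, N, V) has a pointwise equivalent Kripke model M' = (S, R, V), where sRt iff (t ∈ X for some X ∈ N(s)) and {t} ∉ N(s): for all contingency formulas φ and all s ∈ S, M',s ⊨ φ under Kripke semantics iff M,s ⊨ φ under the new neighborhood semantics. -/
lemma qf_union_mem {S : Type} {N : S → Set (Set S)} (hqf : IsQuasiFilter N) (s : S)
    {X Y : Set S} (hX : X ∈ N s) (hY : Y ∈ N s) : X ∪ Y ∈ N s := by
  have h := (hqf s).2.2.1 _ ((hqf s).2.1 _ _ ((hqf s).2.2.1 _ hX) ((hqf s).2.2.1 _ hY))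
  simpa [Set.compl_inter, compl_compl] using h

lemma qf_empty_mem {S : Type} {N : S → Set (Set S)} (hqf : IsQuasiFilter N) (s : S) :
    (∅ : Set S) ∈ N s := by
  have h := (hqf s).2.2.1 _ (hqf s).1
  simpa using h

lemma qf_finite_mem {S : Type} [Finite S] {N : S → Set (Set S)} (hqf : IsQuasiFilter N) (s : S)
    (A : Set S) (h : ∀ t ∈ A, ({t} : Set S) ∈ N s) : A ∈ N s := by
  have hA : A.Finite := Set.toFinite A
  revert h
  induction A, hA using Set.Finite.induction_on with
  | empty => intro _; exact qf_empty_mem hqf s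
  | @insert a s' _ _ ih =>
      intro h
      have : ({a} : Set S) ∪ s' ∈ N s :=
        qf_union_mem hqf s (h a (by simp)) (ih fun t ht => h t (by simp [ht]))
      simpa using this

lemma qf_key {S : Type} [Finite S] {N : S → Set (Set S)} (hqf : IsQuasiFilter N) (s : S)
    (A : Set S) :
    (∀ t u : S, ((∃ X ∈ N s, t ∈ X) ∧ ({t} : Set S) ∉ N s) →
      ((∃ X ∈ N s, u ∈ X) ∧ ({u} : Set S) ∉ N s) → (t ∈ A ↔ u ∈ A)) ↔ A ∈ N s := by
  have hR : ∀ t : S, (∃ X ∈ N s, t ∈ X) := fun t => ⟨Set.univ, (hqf s).1, trivial⟩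
  constructor
  · intro h
    by_cases ht : ∃ t ∈ A, ({t} : Set S) ∉ N s
    · obtain ⟨t, htA, htN⟩ := ht
      by_cases hu : ∃ u ∈ Aᶜ, ({u} : Set S) ∉ N s
      · obtain ⟨u, huA, huN⟩ := hu
        exact absurd ((h t u ⟨hR t, htN⟩ ⟨hR u, huN⟩).mp htA) huA
      · push_neg at hu
        have hAc : Aᶜ ∈ N s := qf_finite_mem hqf s Aᶜ fun u hu' => hu u hu'
        simpa using (hqf s).2.2.1 _ hAc
    · push_neg at ht
      exact qf_finite_mem hqf s A fun t ht' => ht t ht'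
  · intro hA t u ⟨_, htN⟩ ⟨_, huN⟩
    constructor
    · intro htA
      by_contra huA
      rcases (hqf s).2.2.2 A hA (Aᶜ \ {u}) (A \ {t}) with h1 | h1
      · have : A ∪ (Aᶜ \ {u}) = ({u} : Set S)ᶜ := by
          ext x; by_cases hx : x ∈ A <;> simp [hx] <;> rintro rfl <;> tauto
        rw [this] at h1
        exact huN (by simpa using (hqf s).2.2.1 _ h1)
      · have : Aᶜ ∪ (A \ {t}) = ({t} : Set S)ᶜ := by
          ext x; by_cases hx : x ∈ A <;> simp [hx] <;> rintro rfl <;> tauto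
        rw [this] at h1
        exact htN (by simpa using (hqf s).2.2.1 _ h1)
    · intro huA
      by_contra htA
      rcases (hqf s).2.2.2 A hA (Aᶜ \ {t}) (A \ {u}) with h1 | h1
      · have : A ∪ (Aᶜ \ {t}) = ({t} : Set S)ᶜ := by
          ext x; by_cases hx : x ∈ A <;> simp [hx] <;> rintro rfl <;> tauto
        rw [this] at h1
        exact htN (by simpa using (hqf s).2.2.1 _ h1)
      · have : Aᶜ ∪ (A \ {u}) = ({u} : Set S)ᶜ := by
          ext x; by_cases hx : x ∈ A <;> simp [hx] <;> rintro rfl <;> tauto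
        rw [this] at h1
        exact huN (by simpa using (hqf s).2.2.1 _ h1)

/-- every finite quasi-filter model has a pointwise equivalent
Kripke model via sRt iff t belongs to some neighborhood of s and {t} ∉ N(s). -/
theorem stmt13 {S : Type} [Finite S] (M : NbhModel S) (hqf : IsQuasiFilter M.N) :
    ∀ (φ : CForm) (s : S),
      kSat ⟨fun s t => (∃ X ∈ M.N s, t ∈ X) ∧ {t} ∉ M.N s, M.V⟩ s φ ↔
      newSat M s φ := by
  intro φ
  induction φ with
  | atom p => intro s; rfl
  | neg φ ih => intro s; simp [kSat, newSat, ih s]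
  | conj φ ψ ih1 ih2 => intro s; simp [kSat, newSat, ih1 s, ih2 s]
  | delta φ ih =>
      intro s
      have hset : {t | kSat ⟨fun s t => (∃ X ∈ M.N s, t ∈ X) ∧ {t} ∉ M.N s, M.V⟩ t φ}
          = {t | newSat M t φ} := by ext t; exact ih t
      show (∀ t u, _ → _ → _) ↔ _
      simp only [newSat]
      rw [← hset, ← qf_key hqf s]
      constructor
      · intro h t u ht hu
        exact h t u ht hu
      · intro h t u ht hu
        exact h t u ht hu
end

section
/- Under the new neighborhood semantics, the formula ∇p (= ¬Δp) defines the property (d) on the class of c-frames: a c-frame F validates ∇p if and only if for all s and X, X ∈ N(s) implies S\X ∉ N(s). -/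
/-- on c-frames, ∇p defines property (d). -/
theorem stmt15 {S : Type} [Nonempty S] (N : S → Set (Set S)) (hc : HasC N) :
    (∀ (V : ℕ → Set S) (s : S), newSat ⟨N, V⟩ s (.neg (.delta (.atom 0)))) ↔
    (∀ s X, X ∈ N s → Xᶜ ∉ N s) := by
  constructor
  · intro h s X hX _
    exact h (fun _ => X) s hX
  · intro h V s hmem
    exact h s _ hmem (hc s _ hmem)
end

section
/- Under the new neighborhood semantics, the formula p → Δ∇p defines property (b) on the class of c-frames: a c-frame F validates p → Δ∇p iff for all s ∈ S and X ⊆ S, s ∈ X implies {u ∈ S : S\X ∉ N(u)} ∈ N(s). -/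
/-- on c-frames, p → Δ∇p defines property (b). -/
theorem stmt16 {S : Type} [Nonempty S] (N : S → Set (Set S)) (hc : HasC N) :
    (∀ (V : ℕ → Set S) (s : S),
      newSat ⟨N, V⟩ s (.impl (.atom 0) (.delta (.neg (.delta (.atom 0)))))) ↔
    (∀ (s : S) (X : Set S), s ∈ X → {u | Xᶜ ∉ N u} ∈ N s) := by
  have key : ∀ (X : Set S), {t : S | ¬ X ∈ N t} = {u : S | Xᶜ ∉ N u} := by
    intro X
    ext t
    simp only [Set.mem_setOf_eq]
    constructor
    · intro h h'
      exact h (by simpa using hc t Xᶜ h')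
    · intro h h'
      exact h (hc t X h')
  constructor
  · intro h s X hs
    have := h (fun _ => X) s
    simp only [newSat, CForm.impl] at this
    push_neg at this
    have h2 := this hs
    rw [← key X]
    convert h2 using 2
    rfl
  · intro h V s
    simp only [newSat, CForm.impl]
    push_neg
    intro hs
    have h2 := h s (V 0) hs
    rw [← key (V 0)] at h2
    convert h2 using 2
    rfl
end

section
/- Under the new neighborhood semantics, the formula Δp → Δ(p→q) ∨ Δ(¬p→r) defines the property (ws) on the class of all neighborhood frames: a frame F validates this formula iff for all s and all X,Y,Z ⊆ S, X ∈ N(s) implies X∪Y ∈ N(s) or (S\X)∪Z ∈ N(s). -/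
/-- on all neighborhood frames, Δp → Δ(p→q) ∨ Δ(¬p→r)
defines property (ws). -/
theorem stmt17 {S : Type} [Nonempty S] (N : S → Set (Set S)) :
    (∀ (V : ℕ → Set S) (s : S),
      newSat ⟨N, V⟩ s (.impl (.delta (.atom 0))
        (.disj (.delta (.impl (.atom 0) (.atom 1)))
               (.delta (.impl (.neg (.atom 0)) (.atom 2)))))) ↔
    (∀ (s : S) (X : Set S), X ∈ N s → ∀ Y Z : Set S, X ∪ Y ∈ N s ∨ Xᶜ ∪ Z ∈ N s) := by
  have hts : ∀ (V : ℕ → Set S) (s : S),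
      newSat ⟨N, V⟩ s (.impl (.delta (.atom 0))
        (.disj (.delta (.impl (.atom 0) (.atom 1)))
               (.delta (.impl (.neg (.atom 0)) (.atom 2))))) ↔
      (V 0 ∈ N s → (V 0)ᶜ ∪ V 1 ∈ N s ∨ V 0 ∪ V 2 ∈ N s) := by
    intro V s
    simp only [CForm.impl, CForm.disj, newSat]
    have h1 : {t | t ∈ V 0} = V 0 := rfl
    have h2 : {t | ¬(t ∈ V 0 ∧ ¬ t ∈ V 1)} = (V 0)ᶜ ∪ V 1 := by
      ext t; simp [Set.mem_union, and_comm]; tauto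
    have h3 : {t | ¬(¬ t ∈ V 0 ∧ ¬ t ∈ V 2)} = V 0 ∪ V 2 := by
      ext t; simp [Set.mem_union]; tauto
    rw [h1, h2, h3]
    tauto
  constructor
  · intro h s X hX Y Z
    have := (hts (fun n => if n = 0 then X else if n = 1 then Z else Y) s).mp (h _ s)
    simp only [if_pos rfl] at this
    have := this hX
    tauto
  · intro h V s
    rw [hts]
    intro hX
    have := h s (V 0) hX (V 2) (V 1)
    tauto
end

section
/- Under the new neighborhood semantics, Δ⊤ defines property (n) on c-frames (F validates Δ⊤ iff S ∈ N(s) for all s), and Δp ∧ Δq → Δ(p∧q) defines property (i) on c-frames (F validates it iff each N(s) is closed under binary intersections). -/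
/-- on c-frames, Δ⊤ defines (n) and Δp ∧ Δq → Δ(p∧q) defines (i). -/
theorem stmt18 {S : Type} [Nonempty S] (N : S → Set (Set S)) (hc : HasC N) :
    ((∀ (V : ℕ → Set S) (s : S),
        newSat ⟨N, V⟩ s (.delta (.impl (.atom 0) (.atom 0)))) ↔
      (∀ s : S, Set.univ ∈ N s)) ∧
    ((∀ (V : ℕ → Set S) (s : S),
        newSat ⟨N, V⟩ s (.impl (.conj (.delta (.atom 0)) (.delta (.atom 1)))
          (.delta (.conj (.atom 0) (.atom 1))))) ↔
      (∀ (s : S) (X Y : Set S), X ∈ N s → Y ∈ N s → X ∩ Y ∈ N s)) := by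
  constructor
  · constructor
    · intro h s
      have := h (fun _ => ∅) s
      simp only [newSat, CForm.impl] at this
      convert this using 2
      ext t
      simp [newSat]
    · intro h V s
      simp only [newSat, CForm.impl]
      convert h s using 2
      ext t
      simp [newSat]
  · constructor
    · intro h s X Y hX hY
      have := h (fun n => if n = 0 then X else Y) s
      simp only [newSat, CForm.impl, if_true, one_ne_zero, if_false, reduceIte,
        ← Set.inter_def, Set.setOf_mem_eq] at this
      tauto
    · intro h V s
      simp only [newSat, CForm.impl, ← Set.inter_def, Set.setOf_mem_eq]
      rintro ⟨⟨h0, h1⟩, h2⟩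
      exact h2 (h s _ _ h0 h1)
end

section
/- Under the new neighborhood semantics on c-frames, Δp → p defines property (t): a c-frame validates Δp → p iff for all s and X, X ∈ N(s) implies s ∈ X. Note that combined with closure under complements this forces N(s) = ∅ for every s. -/
/-- on c-frames, Δp → p defines property (t); moreover (c) together
with (t) forces every neighborhood set to be empty. -/
theorem stmt19 {S : Type} [Nonempty S] (N : S → Set (Set S)) (hc : HasC N) :
    ((∀ (V : ℕ → Set S) (s : S),
        newSat ⟨N, V⟩ s (.impl (.delta (.atom 0)) (.atom 0))) ↔
      (∀ (s : S) (X : Set S), X ∈ N s → s ∈ X)) ∧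
    ((∀ (s : S) (X : Set S), X ∈ N s → s ∈ X) → ∀ s : S, N s = ∅) := by
  constructor
  · constructor
    · intro h s X hX
      have := h (fun _ => X) s
      simp only [CForm.impl, newSat] at this
      by_contra hs
      exact this ⟨by simpa using hX, hs⟩
    · intro h V s
      simp only [CForm.impl, newSat]
      rintro ⟨h1, h2⟩
      exact h2 (h s _ h1)
  · intro ht s
    ext X
    simp only [Set.mem_empty_iff_false, iff_false]
    intro hX
    exact ht s Xᶜ (hc s X hX) (ht s X hX)
end
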